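/- Suppose f is (α,β)-regular with α > 0, ‖∇f_x(x)‖ ≤ G for all x ∈ X, and x* ∈ X solves VI(X,F). Then for any sequence x_1,…,x_N ∈ X, with Δ_n = ‖x_n − x*‖, the dynamic regret satisfies Regret^d_N ≤ min{ G Σ_{n=1}^N Δ_n, Regret^s_N(x*) } + Σ_{n=1}^N min{ β D_X Δ_n, (β²/(2α)) Δ_n² }. -/
import Mathlib


open scoped RealInnerProductSpace

/-- If `f` is `(α,β)`-regular with `α > 0`, `‖∇f_x(x)‖ ≤ G` on `X`,
and `x*` solves VI(X,F), then for any sequence `x_1,…,x_N ∈ X`, with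
`Δ_n = ‖x_n − x*‖`,
`Regret^d_N ≤ min{G Σ Δ_n, Regret^s_N(x*)} + Σ min{β D_X Δ_n, (β²/(2α)) Δ_n²}`. -/
theorem stmt_12
    {E : Type*} [NormedAddCommGroup E] [InnerProductSpace ℝ E] [FiniteDimensional ℝ E]
    (X : Set E) (hXne : X.Nonempty) (hXcp : IsCompact X) (hXcv : Convex ℝ X)
    (f : E → E → ℝ) (Df : E → E → E) (α β G : ℝ) (hα : 0 < α) (hβ : 0 ≤ β)
    (hsc : ∀ x ∈ X, ∀ y ∈ X, ∀ z ∈ X,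
      f x z + ⟪Df x z, y - z⟫ + α / 2 * ‖y - z‖ ^ 2 ≤ f x y)
    (hlip : ∀ x' ∈ X, ∀ x ∈ X, ∀ y ∈ X, ‖Df x x' - Df y x'‖ ≤ β * ‖x - y‖)
    (hG : ∀ x ∈ X, ‖Df x x‖ ≤ G)
    (xs : E) (hxs : xs ∈ X)
    (hVI : ∀ x ∈ X, 0 ≤ ⟪Df xs xs, x - xs⟫)
    (N : ℕ) (x : Fin N → E) (hx : ∀ n, x n ∈ X) :
    ∑ n, (f (x n) (x n) - sInf (f (x n) '' X))
      ≤ min (G * ∑ n, ‖x n - xs‖) (∑ n, (f (x n) (x n) - f (x n) xs))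
        + ∑ n, min (β * Metric.diam X * ‖x n - xs‖) (β ^ 2 / (2 * α) * ‖x n - xs‖ ^ 2) := by
  -- Claim 1: per-round bound on f (x n) xs - sInf
  have claim1 : ∀ n, f (x n) xs - sInf (f (x n) '' X)
      ≤ min (β * Metric.diam X * ‖x n - xs‖) (β ^ 2 / (2 * α) * ‖x n - xs‖ ^ 2) := by
    intro n
    set Δ := ‖x n - xs‖ with hΔ
    have hΔ0 : 0 ≤ Δ := norm_nonneg _
    have key : ∀ y ∈ X, f (x n) xs
        - min (β * Metric.diam X * Δ) (β ^ 2 / (2 * α) * Δ ^ 2) ≤ f (x n) y := by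
      intro y hy
      have hsc' := hsc (x n) (hx n) y hy xs hxs
      set t := ‖y - xs‖ with ht
      have ht0 : 0 ≤ t := norm_nonneg _
      have htD : t ≤ Metric.diam X := by
        rw [ht, ← dist_eq_norm]
        exact Metric.dist_le_diam_of_mem hXcp.isBounded hy hxs
      have hvi := hVI y hy
      have hsplit : ⟪Df (x n) xs, y - xs⟫
          = ⟪Df xs xs, y - xs⟫ + ⟪Df (x n) xs - Df xs xs, y - xs⟫ := by
        rw [inner_sub_left]; ring
      have hcs : |⟪Df (x n) xs - Df xs xs, y - xs⟫|
          ≤ ‖Df (x n) xs - Df xs xs‖ * t := abs_real_inner_le_norm _ _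
      have hl := hlip xs hxs (x n) (hx n) xs hxs
      have hinner : -(β * Δ * t) ≤ ⟪Df (x n) xs, y - xs⟫ := by
        rw [hsplit]
        have h1 : -(β * Δ * t) ≤ ⟪Df (x n) xs - Df xs xs, y - xs⟫ := by
          have := (abs_le.mp hcs).1
          have h2 : ‖Df (x n) xs - Df xs xs‖ * t ≤ β * Δ * t :=
            mul_le_mul_of_nonneg_right hl ht0
          linarith
        linarith
      -- f (x n) xs - f (x n) y ≤ β Δ t - α/2 t²
      have hmain : f (x n) xs - f (x n) y ≤ β * Δ * t - α / 2 * t ^ 2 := by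
        have := hsc'
        nlinarith [hinner]
      have hb1 : β * Δ * t - α / 2 * t ^ 2 ≤ β * Metric.diam X * Δ := by
        nlinarith [mul_le_mul_of_nonneg_left htD (mul_nonneg hβ hΔ0)]
      have hb2 : β * Δ * t - α / 2 * t ^ 2 ≤ β ^ 2 / (2 * α) * Δ ^ 2 := by
        have h := sq_nonneg (α * t - β * Δ)
        have hα' : 0 < 2 * α := by linarith
        rw [show β ^ 2 / (2 * α) * Δ ^ 2 = β ^ 2 * Δ ^ 2 / (2 * α) by ring, le_div_iff₀ hα']
        nlinarith
      calc f (x n) xs - min (β * Metric.diam X * Δ) (β ^ 2 / (2 * α) * Δ ^ 2)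
          ≤ f (x n) xs - (β * Δ * t - α / 2 * t ^ 2) := by
            have := le_min hb1 hb2
            linarith
        _ ≤ f (x n) y := by linarith
    have hinf : f (x n) xs - min (β * Metric.diam X * Δ) (β ^ 2 / (2 * α) * Δ ^ 2)
        ≤ sInf (f (x n) '' X) := by
      apply le_csInf (hXne.image _)
      rintro v ⟨y, hy, rfl⟩
      exact key y hy
    linarith
  -- Claim 2: f (x n) (x n) - f (x n) xs ≤ G * Δ n
  have claim2 : ∀ n, f (x n) (x n) - f (x n) xs ≤ G * ‖x n - xs‖ := by
    intro n
    have hsc' := hsc (x n) (hx n) xs hxs (x n) (hx n)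
    have hcs : |⟪Df (x n) (x n), xs - x n⟫| ≤ ‖Df (x n) (x n)‖ * ‖xs - x n‖ :=
      abs_real_inner_le_norm _ _
    have hnorm : ‖xs - x n‖ = ‖x n - xs‖ := by rw [norm_sub_rev]
    have hG' := hG (x n) (hx n)
    have h1 : -(G * ‖x n - xs‖) ≤ ⟪Df (x n) (x n), xs - x n⟫ := by
      have := (abs_le.mp hcs).1
      have h2 : ‖Df (x n) (x n)‖ * ‖xs - x n‖ ≤ G * ‖x n - xs‖ := by
        rw [hnorm]; exact mul_le_mul_of_nonneg_right hG' (norm_nonneg _)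
      linarith
    nlinarith [sq_nonneg ‖xs - x n‖, sq_abs ‖xs - x n‖]
  -- Combine
  have hsplit : ∀ n, f (x n) (x n) - sInf (f (x n) '' X)
      = (f (x n) (x n) - f (x n) xs) + (f (x n) xs - sInf (f (x n) '' X)) := by
    intro n; ring
  calc ∑ n, (f (x n) (x n) - sInf (f (x n) '' X))
      = ∑ n, ((f (x n) (x n) - f (x n) xs) + (f (x n) xs - sInf (f (x n) '' X))) := by
        exact Finset.sum_congr rfl fun n _ => hsplit n
    _ = (∑ n, (f (x n) (x n) - f (x n) xs)) + ∑ n, (f (x n) xs - sInf (f (x n) '' X)) :=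
        Finset.sum_add_distrib
    _ ≤ min (G * ∑ n, ‖x n - xs‖) (∑ n, (f (x n) (x n) - f (x n) xs))
        + ∑ n, min (β * Metric.diam X * ‖x n - xs‖) (β ^ 2 / (2 * α) * ‖x n - xs‖ ^ 2) := by
        apply add_le_add
        · apply le_min
          · rw [Finset.mul_sum]
            exact Finset.sum_le_sum fun n _ => claim2 n
          · exact le_refl _
        · exact Finset.sum_le_sum fun n _ => claim1 n
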